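/- Let g be a bounded holomorphic function on the unit disc D and let γ : [0,1) → D be a continuous curve with γ(t) → e^{iθ} as t → 1, approaching the boundary non-tangentially. If g(γ(t)) → L as t → 1, then g has non-tangential limit L at e^{iθ}. -/

import Mathlib

open Metric Complex Filter Topology

set_option maxHeartbeats 1000000

noncomputable def bl (a z : ℂ) : ℂ := (z - a) / (1 - (starRingEnd ℂ) a * z)

lemma norm_sq_eq' (w : ℂ) : ‖w‖ ^ 2 = Complex.normSq w := by
  rw [Complex.sq_norm]

lemma bl_sq_identity (a z : ℂ) :
    ‖1 - (starRingEnd ℂ) a * z‖ ^ 2 - ‖z - a‖ ^ 2 = (1 - ‖a‖ ^ 2) * (1 - ‖z‖ ^ 2) := by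
  simp only [norm_sq_eq', Complex.normSq_apply, Complex.sub_re, Complex.sub_im, Complex.one_re,
    Complex.one_im, Complex.mul_re, Complex.mul_im, Complex.conj_re, Complex.conj_im]
  ring

lemma bl_denom_pos {a z : ℂ} (ha : ‖a‖ < 1) (hz : ‖z‖ ≤ 1) :
    0 < ‖1 - (starRingEnd ℂ) a * z‖ := by
  have h1 : ‖(starRingEnd ℂ) a * z‖ < 1 := by
    rw [norm_mul, RCLike.norm_conj]
    calc ‖a‖ * ‖z‖ ≤ ‖a‖ * 1 := by nlinarith [norm_nonneg a]
    _ < 1 := by nlinarith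
  have := norm_sub_norm_le (1 : ℂ) ((starRingEnd ℂ) a * z)
  simp only [norm_one] at this
  linarith

lemma norm_bl (a z : ℂ) : ‖bl a z‖ = ‖z - a‖ / ‖1 - (starRingEnd ℂ) a * z‖ := by
  rw [bl, norm_div]

lemma norm_bl_sq {a z : ℂ} (ha : ‖a‖ < 1) (hz : ‖z‖ ≤ 1) :
    ‖bl a z‖ ^ 2 = 1 - (1 - ‖a‖ ^ 2) * (1 - ‖z‖ ^ 2) / ‖1 - (starRingEnd ℂ) a * z‖ ^ 2 := by
  have hd := bl_denom_pos ha hz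
  have hd2 : (0:ℝ) < ‖1 - (starRingEnd ℂ) a * z‖ ^ 2 := by positivity
  rw [norm_bl, div_pow, ← bl_sq_identity a z]
  rw [eq_sub_iff_add_eq]
  rw [sub_div]
  have := div_self (ne_of_gt hd2)
  linarith

lemma norm_bl_le_one {a z : ℂ} (ha : ‖a‖ < 1) (hz : ‖z‖ ≤ 1) : ‖bl a z‖ ≤ 1 := by
  have h := norm_bl_sq ha hz
  have hd2 : (0:ℝ) < ‖1 - (starRingEnd ℂ) a * z‖ ^ 2 := pow_pos (bl_denom_pos ha hz) 2
  have hnum : (0:ℝ) ≤ (1 - ‖a‖ ^ 2) * (1 - ‖z‖ ^ 2) :=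
    mul_nonneg (by nlinarith [norm_nonneg a]) (by nlinarith [norm_nonneg z])
  have h3 : (0:ℝ) ≤ (1 - ‖a‖ ^ 2) * (1 - ‖z‖ ^ 2) / ‖1 - (starRingEnd ℂ) a * z‖ ^ 2 :=
    div_nonneg hnum (le_of_lt (pow_pos (bl_denom_pos ha hz) 2))
  have h2 : ‖bl a z‖ ^ 2 ≤ 1 := by rw [h]; linarith
  nlinarith [norm_nonneg (bl a z)]

lemma div_blaschke {f : ℂ → ℂ} {a : ℂ} {B : ℝ} (hf : DifferentiableOn ℂ f (ball (0:ℂ) 1))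
    (ha : a ∈ ball (0:ℂ) 1) (hfa : f a = 0) (hB : ∀ z ∈ ball (0:ℂ) 1, ‖f z‖ ≤ B) :
    ∃ g : ℂ → ℂ, DifferentiableOn ℂ g (ball (0:ℂ) 1) ∧
      (∀ z ∈ ball (0:ℂ) 1, f z = bl a z * g z) ∧ (∀ z ∈ ball (0:ℂ) 1, ‖g z‖ ≤ B) := by
  have ha' : ‖a‖ < 1 := by simpa [mem_ball, dist_eq_norm] using ha
  set g : ℂ → ℂ := fun z => (1 - (starRingEnd ℂ) a * z) * dslope f a z with hg
  have hgd : DifferentiableOn ℂ g (ball (0:ℂ) 1) := by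
    apply DifferentiableOn.mul
    · exact (differentiableOn_const _).sub ((differentiable_id.const_mul _).differentiableOn)
    · exact (Complex.differentiableOn_dslope (isOpen_ball.mem_nhds ha)).2 hf
  have heq : ∀ z ∈ ball (0:ℂ) 1, f z = bl a z * g z := by
    intro z hz
    have hz' : ‖z‖ < 1 := by simpa [mem_ball, dist_eq_norm] using hz
    rcases eq_or_ne z a with rfl | hne
    · simp [bl, hfa]
    · have hden : 1 - (starRingEnd ℂ) a * z ≠ 0 :=
        norm_pos_iff.mp (bl_denom_pos ha' hz'.le)
      rw [hg]
      simp only [bl]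
      rw [dslope_of_ne f hne, slope_def_field, hfa]
      rw [sub_zero]
      have hza : z - a ≠ 0 := sub_ne_zero.2 hne
      calc f z = f z * ((z - a) / (z - a)) * ((1 - (starRingEnd ℂ) a * z) / (1 - (starRingEnd ℂ) a * z)) := by rw [div_self hza, div_self hden]; ring
      _ = _ := by ring
  refine ⟨g, hgd, heq, ?_⟩
  intro z hz
  have hz' : ‖z‖ < 1 := by simpa [mem_ball, dist_eq_norm] using hz
  -- bound via max principle on balls of radius ρ < 1 and ρ → 1
  have hanorm : (0:ℝ) < 1 - ‖a‖ := by linarith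
  set m : ℝ → ℝ := fun ρ => Real.sqrt (1 - (1 - ‖a‖^2) * (1 - ρ^2) / (1 - ‖a‖)^2) with hm
  have claim1 : ∀ ρ : ℝ, ‖z‖ < ρ → ‖a‖ < ρ → ρ < 1 →
      (1 - ‖a‖^2) * (1 - ρ^2) / (1 - ‖a‖)^2 < 1 → ‖g z‖ ≤ B / m ρ := by
    intro ρ hρz hρa hρ1 hsmall
    have hρ0 : 0 < ρ := lt_of_le_of_lt (norm_nonneg z) hρz
    have hm2 : 0 < 1 - (1 - ‖a‖^2) * (1 - ρ^2) / (1 - ‖a‖)^2 := by linarith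
    have hmρ : 0 < m ρ := Real.sqrt_pos.mpr hm2
    have hmsq : m ρ ^ 2 = 1 - (1 - ‖a‖^2) * (1 - ρ^2) / (1 - ‖a‖)^2 := Real.sq_sqrt hm2.le
    have hfront : ∀ ζ ∈ frontier (ball (0:ℂ) ρ), ‖g ζ‖ ≤ B / m ρ := by
      intro ζ hζ
      rw [frontier_ball (0:ℂ) (ne_of_gt hρ0)] at hζ
      have hζρ : ‖ζ‖ = ρ := by simpa [mem_sphere_iff_norm] using hζ
      have hζ1 : ‖ζ‖ < 1 := by rw [hζρ]; exact hρ1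
      have hζball : ζ ∈ ball (0:ℂ) 1 := by simpa [mem_ball, dist_eq_norm] using hζ1
      have hblζ : m ρ ≤ ‖bl a ζ‖ := by
        have hd := bl_denom_pos ha' hζ1.le
        have hd1 : 1 - ‖a‖ ≤ ‖1 - (starRingEnd ℂ) a * ζ‖ := by
          have := norm_sub_norm_le (1:ℂ) ((starRingEnd ℂ) a * ζ)
          have h2 : ‖(starRingEnd ℂ) a * ζ‖ ≤ ‖a‖ := by
            rw [norm_mul, RCLike.norm_conj]
            nlinarith [norm_nonneg a]
          simp only [norm_one] at this
          linarith
        have hnum : (0:ℝ) ≤ (1 - ‖a‖^2) * (1 - ρ^2) := by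
          apply mul_nonneg <;> nlinarith [norm_nonneg a]
        have hratio : (1 - ‖a‖^2) * (1 - ‖ζ‖^2) / ‖1 - (starRingEnd ℂ) a * ζ‖^2
            ≤ (1 - ‖a‖^2) * (1 - ρ^2) / (1 - ‖a‖)^2 := by
          rw [hζρ]
          apply div_le_div_of_nonneg_left hnum (by positivity)
          · nlinarith
        have hsq : m ρ ^ 2 ≤ ‖bl a ζ‖ ^ 2 := by
          rw [hmsq, norm_bl_sq ha' hζ1.le]; linarith
        nlinarith [norm_nonneg (bl a ζ), hmρ.le]
      have hfζ : ‖f ζ‖ ≤ B := hB ζ hζball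
      rw [heq ζ hζball, norm_mul] at hfζ
      rw [le_div_iff₀ hmρ]
      calc ‖g ζ‖ * m ρ ≤ ‖bl a ζ‖ * ‖g ζ‖ := by nlinarith [norm_nonneg (g ζ)]
      _ ≤ B := hfζ
    have hdc : DiffContOnCl ℂ g (ball (0:ℂ) ρ) :=
      hgd.diffContOnCl_ball (closedBall_subset_ball hρ1)
    exact Complex.norm_le_of_forall_mem_frontier_norm_le isBounded_ball hdc hfront
      (subset_closure (by simpa [mem_ball, dist_eq_norm] using hρz))
  -- now take ρ → 1⁻
  have htend0 : Tendsto (fun ρ : ℝ => (1 - ‖a‖^2) * (1 - ρ^2) / (1 - ‖a‖)^2) (𝓝 1) (𝓝 0) := by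
    have hc : Continuous (fun ρ : ℝ => (1 - ‖a‖^2) * (1 - ρ^2) / (1 - ‖a‖)^2) :=
      (continuous_const.mul (continuous_const.sub (continuous_pow 2))).div_const _
    have := hc.tendsto 1
    simpa using this
  have htendm : Tendsto (fun ρ => B / m ρ) (𝓝 1) (𝓝 B) := by
    have h1 : Tendsto (fun ρ : ℝ => 1 - (1 - ‖a‖^2) * (1 - ρ^2) / (1 - ‖a‖)^2) (𝓝 1) (𝓝 1) := by
      have := (tendsto_const_nhds (x := (1:ℝ))).sub htend0
      simpa using this
    have h2 : Tendsto m (𝓝 1) (𝓝 1) := by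
      have := (Real.continuous_sqrt.tendsto 1).comp h1
      simpa [hm, Real.sqrt_one, Function.comp_def] using this
    have := (tendsto_const_nhds (x := B)).div h2 one_ne_zero
    simpa [Pi.div_def] using this
  have hev : ∀ᶠ ρ in 𝓝[<] (1:ℝ), ‖g z‖ ≤ B / m ρ := by
    have hmax : max ‖z‖ ‖a‖ < 1 := max_lt hz' ha'
    have hev1 : ∀ᶠ ρ in 𝓝[<] (1:ℝ), ρ ∈ Set.Ioo (max ‖z‖ ‖a‖) 1 :=
      eventually_of_mem (Ioo_mem_nhdsLT hmax) (fun x hx => hx)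
    have hev2 : ∀ᶠ ρ in 𝓝[<] (1:ℝ), (1 - ‖a‖^2) * (1 - ρ^2) / (1 - ‖a‖)^2 < 1 :=
      (htend0.mono_left nhdsWithin_le_nhds).eventually_lt_const one_pos |>.mono (fun x hx => hx)
    filter_upwards [hev1, hev2] with ρ hρ hρ2
    exact claim1 ρ (lt_of_le_of_lt (le_max_left _ _) hρ.1)
      (lt_of_le_of_lt (le_max_right _ _) hρ.1) hρ.2 hρ2
  exact ge_of_tendsto (htendm.mono_left nhdsWithin_le_nhds) hev

noncomputable def CC (δ : ℝ) : ℕ → ℝ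
  | 0 => 1
  | n + 1 => 2 + (4 / δ) * CC δ n

lemma CC_ge_one {δ : ℝ} (hδ : 0 < δ) : ∀ n, 1 ≤ CC δ n := by
  intro n
  induction n with
  | zero => simp [CC]
  | succ n ih =>
    have : 0 < 4 / δ := by positivity
    simp only [CC]
    nlinarith

lemma newton : ∀ (n : ℕ) (f : ℂ → ℂ) (a : ℕ → ℂ) (B ε δ r : ℝ),
    DifferentiableOn ℂ f (ball (0:ℂ) 1) → (∀ z ∈ ball (0:ℂ) 1, ‖f z‖ ≤ B) →
    (∀ k < n, a k ∈ ball (0:ℂ) 1) → (∀ k < n, ‖f (a k)‖ ≤ ε) →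
    (∀ j < n, ∀ k < n, j ≠ k → δ ≤ ‖bl (a k) (a j)‖) →
    0 < δ → 0 ≤ ε → 0 ≤ r → r ≤ 1 →
    ∀ z ∈ ball (0:ℂ) 1, (∀ k < n, ‖bl (a k) z‖ ≤ r) →
    ‖f z‖ ≤ ε * CC δ n + r ^ n * B := by
  intro n
  induction n with
  | zero =>
    intro f a B ε δ r hf hB _ _ _ hδ hε hr hr1 z hz _
    have := hB z hz
    simp only [CC, pow_zero]
    linarith
  | succ n ih =>
    intro f a B ε δ r hf hB hmem hval hsep hδ hε hr hr1 z hz hbl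
    have ha0 : a 0 ∈ ball (0:ℂ) 1 := hmem 0 (Nat.succ_pos n)
    set c := f (a 0) with hc
    have hcε : ‖c‖ ≤ ε := hval 0 (Nat.succ_pos n)
    have hf2 : DifferentiableOn ℂ (fun z => f z - c) (ball (0:ℂ) 1) :=
      hf.sub (differentiableOn_const c)
    have hB2 : ∀ w ∈ ball (0:ℂ) 1, ‖f w - c‖ ≤ B + ε := by
      intro w hw
      calc ‖f w - c‖ ≤ ‖f w‖ + ‖c‖ := norm_sub_le _ _
      _ ≤ B + ε := add_le_add (hB w hw) hcε
    obtain ⟨g, hgd, hgeq, hgB⟩ := div_blaschke hf2 ha0 (by simp [hc]) hB2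
    -- values of g at shifted points
    have hgval : ∀ k < n, ‖g (a (k+1))‖ ≤ 2 * ε / δ := by
      intro k hk
      have hk1 : k + 1 < n + 1 := by omega
      have hmemk := hmem (k+1) hk1
      have heqk := hgeq (a (k+1)) hmemk
      have hsepk := hsep (k+1) hk1 0 (Nat.succ_pos n) (by omega)
      have hvk : ‖f (a (k+1)) - c‖ ≤ 2 * ε := by
        calc ‖f (a (k+1)) - c‖ ≤ ‖f (a (k+1))‖ + ‖c‖ := norm_sub_le _ _
        _ ≤ 2 * ε := by have := hval (k+1) hk1; linarith
      rw [heqk, norm_mul] at hvk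
      rw [le_div_iff₀ hδ]
      calc ‖g (a (k+1))‖ * δ ≤ ‖bl (a 0) (a (k+1))‖ * ‖g (a (k+1))‖ := by
            nlinarith [norm_nonneg (g (a (k+1)))]
      _ ≤ 2 * ε := hvk
    -- apply IH to g with shifted points
    have hgz := ih g (fun k => a (k+1)) (B + ε) (2 * ε / δ) δ r hgd hgB
      (fun k hk => hmem (k+1) (by omega)) hgval
      (fun j hj k hk hjk => hsep (j+1) (by omega) (k+1) (by omega) (by omega))
      hδ (by positivity) hr hr1 z hz (fun k hk => hbl (k+1) (by omega))
    have heqz := hgeq z hz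
    have hblz := hbl 0 (Nat.succ_pos n)
    have hCn := CC_ge_one hδ n
    have hrn : r ^ n ≤ 1 := pow_le_one₀ hr hr1
    have hrn1 : r ^ (n+1) ≤ r ^ n := by
      calc r ^ (n+1) = r ^ n * r := by ring
      _ ≤ r ^ n * 1 := by nlinarith [pow_nonneg hr n]
      _ = r ^ n := by ring
    have key : ‖f z‖ ≤ ε + r * ‖g z‖ := by
      calc ‖f z‖ = ‖c + bl (a 0) z * g z‖ := by rw [← heqz]; ring_nf
      _ ≤ ‖c‖ + ‖bl (a 0) z * g z‖ := norm_add_le _ _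
      _ ≤ ε + r * ‖g z‖ := by
          rw [norm_mul]
          have hg0 : 0 ≤ ‖g z‖ := norm_nonneg _
          nlinarith
    have hgz' : ‖g z‖ ≤ (2 * ε / δ) * CC δ n + r ^ n * (B + ε) := hgz
    simp only [CC]
    have hB0 : 0 ≤ B := le_trans (norm_nonneg _) (hB z hz)
    have hi : (0:ℝ) ≤ δ⁻¹ := inv_nonneg.mpr hδ.le
    have hps : r ^ (n+1) = r ^ n * r := pow_succ r n
    have hp1 : r ^ (n+1) ≤ 1 := pow_le_one₀ hr hr1
    have hrgz := mul_le_mul_of_nonneg_left hgz' hr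
    have hgz0 : 0 ≤ ‖g z‖ := norm_nonneg _
    have hq : 0 ≤ ε * δ⁻¹ * CC δ n := by positivity
    have hq2 : 0 ≤ (ε/δ) * CC δ n := by positivity
    calc ‖f z‖ ≤ ε + r * ‖g z‖ := key
    _ ≤ ε + r * (2*ε/δ*CC δ n + r^n*(B+ε)) := by linarith [hrgz]
    _ = ε + 2*r*((ε/δ)*CC δ n) + r^(n+1)*B + r^(n+1)*ε := by rw [hps]; ring
    _ ≤ ε + 2*((ε/δ)*CC δ n) + r^(n+1)*B + ε := by nlinarith [hq2, hp1, hε, hr1, hr]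
    _ ≤ ε*(2 + 4/δ*CC δ n) + r^(n+1)*B := by
        have hre : ε*(2 + 4/δ*CC δ n) = 2*ε + 4*(ε/δ*CC δ n) := by
          field_simp
        linarith [hq2]

lemma norm_one_sub_conj_mul {a w : ℂ} (hw : ‖w‖ = 1) :
    ‖1 - (starRingEnd ℂ) a * w‖ = ‖w - a‖ := by
  have h1 : (1 : ℂ) - (starRingEnd ℂ) a * w = (starRingEnd ℂ) (w - a) * w := by
    have h2 : (starRingEnd ℂ) w * w = 1 := by
      rw [← Complex.normSq_eq_conj_mul_self]
      norm_cast
      have : ‖w‖ = 1 := by rw [hw]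
      rw [← Complex.sq_norm, this]; norm_num
    rw [map_sub, sub_mul, h2]
  rw [h1, norm_mul, RCLike.norm_conj, hw, mul_one]


/-- Lindelöf's theorem: let `g` be a bounded holomorphic function on the unit disc, and let
`γ : [0,1) → 𝔻` be a continuous curve tending to the boundary point `e^{iθ}` which eventually
lies in some Stolz angle at `e^{iθ}`. If `g ∘ γ` tends to `L`, then `g` has non-tangential
limit `L` at `e^{iθ}`, i.e. `g → L` along every Stolz angle at `e^{iθ}`. -/
theorem stmt6 (g : ℂ → ℂ) (M : ℝ) (γ : ℝ → ℂ) (θ : ℝ) (L : ℂ) (α₀ : ℝ) (hα₀ : 1 < α₀)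
    (hg : DifferentiableOn ℂ g (ball (0 : ℂ) 1))
    (hbd : ∀ z ∈ ball (0 : ℂ) 1, ‖g z‖ ≤ M)
    (hγcont : ContinuousOn γ (Set.Ico (0 : ℝ) 1))
    (hγmem : ∀ t ∈ Set.Ico (0 : ℝ) 1, γ t ∈ ball (0 : ℂ) 1)
    (hγlim : Tendsto γ (nhdsWithin 1 (Set.Iio 1)) (nhds (Complex.exp (θ * Complex.I))))
    (hγstolz : ∀ᶠ t in nhdsWithin 1 (Set.Iio 1),
      ‖γ t - Complex.exp (θ * Complex.I)‖ < α₀ * (1 - ‖γ t‖))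
    (hgγ : Tendsto (g ∘ γ) (nhdsWithin 1 (Set.Iio 1)) (nhds L)) :
    ∀ α > 1, Tendsto g
      (nhdsWithin (Complex.exp (θ * Complex.I))
        {ζ : ℂ | ζ ∈ ball (0 : ℂ) 1 ∧
          ‖ζ - Complex.exp (θ * Complex.I)‖ < α * (1 - ‖ζ‖)})
      (nhds L) := by
  set w : ℂ := Complex.exp (θ * Complex.I) with hw
  have hwnorm : ‖w‖ = 1 := by
    rw [hw]; exact Complex.norm_exp_ofReal_mul_I θ
  have hα₀0 : (0:ℝ) < α₀ := by linarith
  have hM0 : 0 ≤ M := le_trans (norm_nonneg _) (hbd 0 (by simp))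
  have hLM : ‖L‖ ≤ M := by
    refine le_of_tendsto hgγ.norm ?_
    filter_upwards [Ioo_mem_nhdsLT (show (0:ℝ) < 1 by norm_num)] with t ht
    exact hbd (γ t) (hγmem t ⟨ht.1.le, ht.2⟩)
  intro α hα
  have hα0 : (0:ℝ) < α := by linarith
  rw [Metric.tendsto_nhdsWithin_nhds]
  intro ε' hε'
  -- constants
  set q : ℝ := 4 / (25 * α * α₀) with hq
  have hq0 : 0 < q := by positivity
  have hq1 : q < 1 := by
    rw [hq, div_lt_one (by positivity)]
    nlinarith
  set r : ℝ := Real.sqrt (1 - q) with hr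
  have hr0 : 0 ≤ r := Real.sqrt_nonneg _
  have hrsq : r ^ 2 = 1 - q := Real.sq_sqrt (by linarith)
  have hr1 : r < 1 := by nlinarith
  obtain ⟨K, hK⟩ := exists_pow_lt_of_lt_one (show (0:ℝ) < ε'/2/(2*M+1) by positivity) hr1
  have hMrK : 2*M*r^K < ε'/2 := by
    have h1 : 2*M*r^K ≤ (2*M+1)*r^K := by nlinarith [pow_nonneg hr0 K]
    have h2 : (2*M+1)*r^K < ε'/2 := by
      rw [div_div] at hK
      have h3 : (2*M+1)*r^K < (2*M+1)*(ε'/(2*(2*M+1))) :=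
        mul_lt_mul_of_pos_left hK (by positivity)
      have h4 : (2*M+1)*(ε'/(2*(2*M+1))) = ε'/2 := by
        field_simp
      linarith
    linarith
  set N : ℕ := K + 1 with hN
  have hN0 : (0:ℝ) < (N:ℝ) := by positivity
  set δ : ℝ := (6*(N:ℝ))⁻¹ with hδ
  have hδ0 : 0 < δ := by positivity
  set C : ℝ := CC δ N with hC
  have hC1 : 1 ≤ C := CC_ge_one hδ0 N
  set εc : ℝ := ε'/(4*C) with hεc
  have hεc0 : 0 < εc := by positivity
  -- eventual properties on the curve
  have hevd : ∀ᶠ t in 𝓝[<] (1:ℝ), dist ((g ∘ γ) t) L < εc :=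
    Metric.tendsto_nhds.mp hgγ εc hεc0
  obtain ⟨T, hT, hTsub⟩ := mem_nhdsLT_iff_exists_Ioo_subset.mp (hγstolz.and hevd)
  set T' : ℝ := max T 0 with hT'
  have hT'1 : T' < 1 := max_lt hT (by norm_num)
  set ts : ℝ := (T' + 1)/2 with hts
  have hts1 : ts < 1 := by rw [hts]; linarith
  have htsT' : T' < ts := by rw [hts]; linarith
  have hts0 : 0 ≤ ts := by
    have : (0:ℝ) ≤ T' := le_max_right T 0
    rw [hts]; linarith
  have htsmem : ts ∈ Set.Ico (0:ℝ) 1 := ⟨hts0, hts1⟩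
  have hγts : γ ts ∈ ball (0:ℂ) 1 := hγmem ts htsmem
  set d : ℝ := ‖γ ts - w‖ with hd
  have hd0 : 0 < d := by
    rw [hd, norm_pos_iff, sub_ne_zero]
    intro hcon
    have : ‖γ ts‖ < 1 := by simpa [mem_ball, dist_eq_norm] using hγts
    rw [hcon, hwnorm] at this
    exact lt_irrefl _ this
  refine ⟨2*d/3, by positivity, ?_⟩
  intro z hzS hdist
  obtain ⟨hzball, hzstolz⟩ := hzS
  have hznorm : ‖z‖ < 1 := by simpa [mem_ball, dist_eq_norm] using hzball
  set s : ℝ := ‖z - w‖ with hs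
  have hs0 : 0 < s := by
    rw [hs, norm_pos_iff, sub_ne_zero]
    intro hcon
    rw [hcon, hwnorm] at hznorm
    exact lt_irrefl _ hznorm
  have hsd : s < 2*d/3 := by rw [hs, ← dist_eq_norm]; exact hdist
  have hzst : s < α * (1 - ‖z‖) := by
    rw [hs]
    exact hzstolz
  have h1z : s/α < 1 - ‖z‖ := by rw [div_lt_iff₀ hα0]; linarith [hzst]
  -- levels
  set lam : ℕ → ℝ := fun k => s * (1 + ((k:ℝ)+1)/(2*(N:ℝ))) with hlam
  have hlam_lb : ∀ k, s ≤ lam k := by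
    intro k
    rw [hlam]
    have : (0:ℝ) ≤ ((k:ℝ)+1)/(2*(N:ℝ)) := by positivity
    nlinarith
  have hlam_ub : ∀ k < N, lam k ≤ 3*s/2 := by
    intro k hk
    have hkN : (k:ℝ) + 1 ≤ (N:ℝ) := by exact_mod_cast hk
    have h1 : ((k:ℝ)+1)/(2*(N:ℝ)) ≤ 1/2 := by
      rw [div_le_div_iff₀ (by positivity) (by norm_num)]
      linarith
    rw [hlam]
    nlinarith
  have hlam_pos : ∀ k, 0 < lam k := fun k => lt_of_lt_of_le hs0 (hlam_lb k)
  have hlam_d : ∀ k < N, lam k < d := by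
    intro k hk
    calc lam k ≤ 3*s/2 := hlam_ub k hk
    _ < 3*(2*d/3)/2 := by linarith
    _ = d := by ring
  -- select curve points by IVT
  have htendγ : Tendsto (fun t => ‖γ t - w‖) (𝓝[<] (1:ℝ)) (𝓝 0) := by
    have h1 : Tendsto (fun t => γ t - w) (𝓝[<] (1:ℝ)) (𝓝 0) := by
      simpa using hγlim.sub_const w
    simpa using h1.norm
  have hsel : ∀ k, k < N → ∃ t, t ∈ Set.Ico ts 1 ∧ ‖γ t - w‖ = lam k := by
    intro k hk
    have hev2 : ∀ᶠ t in 𝓝[<] (1:ℝ), ‖γ t - w‖ < lam k :=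
      htendγ.eventually_lt_const (hlam_pos k)
    obtain ⟨T₂, hT₂, hT₂sub⟩ := mem_nhdsLT_iff_exists_Ioo_subset.mp hev2
    set t' : ℝ := (max T₂ ts + 1)/2 with ht'
    have hmax1 : max T₂ ts < 1 := max_lt hT₂ hts1
    have ht'1 : t' < 1 := by rw [ht']; linarith
    have ht'T₂ : T₂ < t' := by
      have := le_max_left T₂ ts
      rw [ht']; linarith
    have ht'ts : ts ≤ t' := by
      have := le_max_right T₂ ts
      rw [ht']; linarith
    have hℓt' : ‖γ t' - w‖ < lam k := hT₂sub ⟨ht'T₂, ht'1⟩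
    have hcont : ContinuousOn (fun t => ‖γ t - w‖) (Set.Icc ts t') := by
      apply ContinuousOn.norm
      apply ContinuousOn.sub _ continuousOn_const
      exact hγcont.mono (fun x hx => ⟨le_trans hts0 hx.1, lt_of_le_of_lt hx.2 ht'1⟩)
    have hivt := intermediate_value_Icc' ht'ts hcont
    have hlammem : lam k ∈ Set.Icc ‖γ t' - w‖ ‖γ ts - w‖ :=
      ⟨hℓt'.le, by rw [← hd]; exact (hlam_d k hk).le⟩
    obtain ⟨tk, htk, htkval⟩ := hivt hlammem
    exact ⟨tk, ⟨htk.1, lt_of_le_of_lt htk.2 ht'1⟩, htkval⟩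
  choose! tt htt1 htt2 using hsel
  set a : ℕ → ℂ := fun k => γ (tt k) with ha
  -- properties of the selected points
  have hprop : ∀ k < N, a k ∈ ball (0:ℂ) 1 ∧ ‖a k - w‖ = lam k ∧
      ‖g (a k) - L‖ ≤ εc ∧ s/α₀ ≤ 1 - ‖a k‖ := by
    intro k hk
    have h1 := htt1 k hk
    have h2 := htt2 k hk
    have htmem : tt k ∈ Set.Ico (0:ℝ) 1 := ⟨le_trans hts0 h1.1, h1.2⟩
    have hTlt : T < tt k := lt_of_le_of_lt (le_max_left T 0) (lt_of_lt_of_le htsT' h1.1)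
    have hIoo := hTsub ⟨hTlt, h1.2⟩
    have hballk : a k ∈ ball (0:ℂ) 1 := hγmem _ htmem
    have hnormk : ‖a k‖ < 1 := by simpa [mem_ball, dist_eq_norm] using hballk
    refine ⟨hballk, h2, ?_, ?_⟩
    · have := hIoo.2
      rw [Function.comp_apply, dist_eq_norm] at this
      exact this.le
    · have hst := hIoo.1
      rw [show ‖γ (tt k) - w‖ = ‖a k - w‖ from rfl] at hst
      have hst' : ‖a k - w‖ < α₀ * (1 - ‖a k‖) := by
        exact hst
      rw [h2] at hst'
      have := hlam_lb k
      rw [div_le_iff₀ hα₀0]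
      nlinarith
  -- denominator estimates
  have hden : ∀ j < N, ∀ k < N, ‖(1:ℂ) - (starRingEnd ℂ) (a k) * (a j)‖ ≤ lam k + lam j := by
    intro j hj k hk
    obtain ⟨hbk, hlk, _, _⟩ := hprop k hk
    obtain ⟨hbj, hlj, _, _⟩ := hprop j hj
    have hnk : ‖a k‖ < 1 := by simpa [mem_ball, dist_eq_norm] using hbk
    have hid : (1:ℂ) - (starRingEnd ℂ) (a k) * (a j)
        = (1 - (starRingEnd ℂ) (a k) * w) + (starRingEnd ℂ) (a k) * (w - a j) := by ring
    calc ‖(1:ℂ) - (starRingEnd ℂ) (a k) * (a j)‖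
        ≤ ‖(1:ℂ) - (starRingEnd ℂ) (a k) * w‖ + ‖(starRingEnd ℂ) (a k) * (w - a j)‖ := by
          rw [hid]; exact norm_add_le _ _
    _ ≤ lam k + lam j := by
        rw [norm_one_sub_conj_mul hwnorm, norm_mul, RCLike.norm_conj]
        have h1 : ‖w - a k‖ = lam k := by rw [norm_sub_rev]; exact hlk
        have h2 : ‖w - a j‖ = lam j := by rw [norm_sub_rev]; exact hlj
        rw [h1, h2]
        have h3 : ‖a k‖ * lam j ≤ 1 * lam j :=
          mul_le_mul_of_nonneg_right hnk.le (hlam_pos j).le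
        linarith
  -- separation
  have hsep : ∀ j < N, ∀ k < N, j ≠ k → δ ≤ ‖bl (a k) (a j)‖ := by
    intro j hj k hk hjk
    obtain ⟨hbk, hlk, _, _⟩ := hprop k hk
    obtain ⟨hbj, hlj, _, _⟩ := hprop j hj
    have hnk : ‖a k‖ < 1 := by simpa [mem_ball, dist_eq_norm] using hbk
    have hnj : ‖a j‖ < 1 := by simpa [mem_ball, dist_eq_norm] using hbj
    have hdpos := bl_denom_pos hnk hnj.le
    have hnum : s/(2*(N:ℝ)) ≤ ‖a j - a k‖ := by
      have h1 : |‖a j - w‖ - ‖a k - w‖| ≤ ‖(a j - w) - (a k - w)‖ := abs_norm_sub_norm_le _ _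
      have h2 : (a j - w) - (a k - w) = a j - a k := by ring
      rw [h2, hlj, hlk] at h1
      have h3 : lam j - lam k = s * (((j:ℝ) - (k:ℝ))/(2*(N:ℝ))) := by
        rw [hlam]; ring
      have h4 : (1:ℝ) ≤ |(j:ℝ) - (k:ℝ)| := by
        have h5 : (1:ℤ) ≤ |(j:ℤ) - (k:ℤ)| := by
          have h8 : (j:ℤ) ≠ (k:ℤ) := by exact_mod_cast hjk
          rcases h8.lt_or_gt with h9|h9
          · rw [abs_of_neg (by linarith)]; linarith
          · rw [abs_of_pos (by linarith)]; linarith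
        have h6 : ((1:ℤ):ℝ) ≤ ((|(j:ℤ) - (k:ℤ)| : ℤ) : ℝ) := by exact_mod_cast h5
        push_cast at h6
        exact h6
      have h2N : (0:ℝ) < 2*(N:ℝ) := by positivity
      have h7 : s/(2*(N:ℝ)) ≤ |lam j - lam k| := by
        rw [h3, abs_mul, abs_of_pos hs0, abs_div, abs_of_pos h2N, ← mul_div_assoc]
        rw [div_le_div_iff₀ h2N h2N]
        refine mul_le_mul_of_nonneg_right ?_ h2N.le
        have h8 := mul_le_mul_of_nonneg_left h4 hs0.le
        linarith
      linarith
    have hdenjk : ‖(1:ℂ) - (starRingEnd ℂ) (a k) * (a j)‖ ≤ 3*s := by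
      have := hden j hj k hk
      have h1 := hlam_ub k hk
      have h2 := hlam_ub j hj
      linarith
    rw [norm_bl]
    have hq : δ = (s/(2*(N:ℝ)))/(3*s) := by
      rw [hδ]
      field_simp
      ring
    rw [hq]
    exact div_le_div₀ (norm_nonneg _) hnum hdpos hdenjk
  -- bl bound towards z
  have hblz : ∀ k < N, ‖bl (a k) z‖ ≤ r := by
    intro k hk
    obtain ⟨hbk, hlk, _, hck⟩ := hprop k hk
    have hnk : ‖a k‖ < 1 := by simpa [mem_ball, dist_eq_norm] using hbk
    have hdpos := bl_denom_pos hnk hznorm.le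
    have hdz : ‖(1:ℂ) - (starRingEnd ℂ) (a k) * z‖ ≤ 5*s/2 := by
      have hid : (1:ℂ) - (starRingEnd ℂ) (a k) * z
          = (1 - (starRingEnd ℂ) (a k) * w) + (starRingEnd ℂ) (a k) * (w - z) := by ring
      calc ‖(1:ℂ) - (starRingEnd ℂ) (a k) * z‖
          ≤ ‖(1:ℂ) - (starRingEnd ℂ) (a k) * w‖ + ‖(starRingEnd ℂ) (a k) * (w - z)‖ := by
            rw [hid]; exact norm_add_le _ _
      _ ≤ 5*s/2 := by
          rw [norm_one_sub_conj_mul hwnorm, norm_mul, RCLike.norm_conj]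
          have h1 : ‖w - a k‖ = lam k := by rw [norm_sub_rev]; exact hlk
          have h2 : ‖w - z‖ = s := by rw [norm_sub_rev]
          rw [h1, h2]
          have h3 := hlam_ub k hk
          have h4 : ‖a k‖ * s ≤ 1 * s := mul_le_mul_of_nonneg_right hnk.le hs0.le
          linarith
    have hnum : s/α₀ * (s/α) ≤ (1 - ‖a k‖^2) * (1 - ‖z‖^2) := by
      have h1 : s/α₀ ≤ 1 - ‖a k‖ := hck
      have h2 : s/α ≤ 1 - ‖z‖ := h1z.le
      have h3 : 1 - ‖a k‖ ≤ 1 - ‖a k‖^2 := by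
        have hh : ‖a k‖*‖a k‖ ≤ 1*‖a k‖ := mul_le_mul_of_nonneg_right hnk.le (norm_nonneg _)
        rw [sq]
        linarith
      have h4 : 1 - ‖z‖ ≤ 1 - ‖z‖^2 := by
        have hh : ‖z‖*‖z‖ ≤ 1*‖z‖ := mul_le_mul_of_nonneg_right hznorm.le (norm_nonneg _)
        rw [sq]
        linarith
      have h5 : (0:ℝ) ≤ s/α₀ := by positivity
      have h6 : (0:ℝ) ≤ s/α := by positivity
      have hA : (0:ℝ) ≤ 1 - ‖a k‖ := le_trans h5 h1
      have hB' : (0:ℝ) ≤ 1 - ‖z‖ := le_trans h6 h2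
      calc s/α₀ * (s/α) ≤ (1 - ‖a k‖) * (1 - ‖z‖) := mul_le_mul h1 h2 h6 hA
      _ ≤ (1 - ‖a k‖^2) * (1 - ‖z‖^2) := by
          refine mul_le_mul h3 h4 hB' ?_
          have hh : ‖a k‖*‖a k‖ ≤ 1*1 := mul_le_mul hnk.le hnk.le (norm_nonneg _) one_pos.le
          rw [sq]
          linarith
    have hratio : q ≤ (1 - ‖a k‖^2) * (1 - ‖z‖^2) / ‖(1:ℂ) - (starRingEnd ℂ) (a k) * z‖^2 := by
      rw [le_div_iff₀ (pow_pos hdpos 2)]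
      have h1 : ‖(1:ℂ) - (starRingEnd ℂ) (a k) * z‖^2 ≤ (5*s/2)^2 :=
        pow_le_pow_left₀ hdpos.le hdz 2
      have h2 : q * ‖(1:ℂ) - (starRingEnd ℂ) (a k) * z‖^2 ≤ q * (5*s/2)^2 :=
        mul_le_mul_of_nonneg_left h1 hq0.le
      have h3 : q * (5*s/2)^2 = s/α₀ * (s/α) := by
        rw [hq]
        field_simp
        ring
      linarith
    have hsq : ‖bl (a k) z‖^2 ≤ r^2 := by
      rw [norm_bl_sq hnk hznorm.le, hrsq]
      linarith
    exact (pow_le_pow_iff_left₀ (norm_nonneg _) hr0 two_ne_zero).mp hsq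
  -- apply Newton bound
  have hfdiff : DifferentiableOn ℂ (fun ζ => g ζ - L) (ball (0:ℂ) 1) :=
    hg.sub (differentiableOn_const L)
  have hfB : ∀ ζ ∈ ball (0:ℂ) 1, ‖g ζ - L‖ ≤ M + M := by
    intro ζ hζ
    calc ‖g ζ - L‖ ≤ ‖g ζ‖ + ‖L‖ := norm_sub_le _ _
    _ ≤ M + M := add_le_add (hbd ζ hζ) hLM
  have hnewton := newton N (fun ζ => g ζ - L) a (M+M) εc δ r hfdiff hfB
    (fun k hk => (hprop k hk).1) (fun k hk => (hprop k hk).2.2.1)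
    hsep hδ0 hεc0.le hr0 hr1.le z hzball hblz
  rw [dist_eq_norm]
  have hCpos : (0:ℝ) < C := by linarith
  have h1 : εc * C = ε'/4 := by
    rw [hεc]
    field_simp
  have h2 : r^N * (M+M) ≤ 2*M*r^K := by
    have h3 : r^N = r^K * r := by rw [hN, pow_succ]
    have h4 : r^K * r ≤ r^K * 1 := mul_le_mul_of_nonneg_left hr1.le (pow_nonneg hr0 K)
    calc r^N * (M+M) = r^K*r*(2*M) := by rw [h3]; ring
    _ ≤ r^K*1*(2*M) := mul_le_mul_of_nonneg_right h4 (by linarith)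
    _ = 2*M*r^K := by ring
  calc ‖g z - L‖ ≤ εc * C + r^N * (M+M) := hnewton
  _ ≤ ε'/4 + 2*M*r^K := by rw [h1]; linarith
  _ < ε'/4 + ε'/2 := by linarith
  _ < ε' := by linarith
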